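/- Let Ω ⊂ ℝ^N be a bounded open set, let U ⊂ ℝ^N be an open set containing the closure of Ω, let 1 < q < 2, and let u ∈ C¹(U) be such that ∇u(x) ≠ 0 for every x in the closure of Ω with u(x) = 0. Then for all bounded measurable functions v, w : Ω → ℝ, the limit lim_{t→0} (1/t) ∫_Ω ( |u+tw|^{q−2}(u+tw) − |u|^{q−2}u ) v dx exists and equals (q−1) ∫_Ω |u|^{q−2} v w dx, the latter integral being absolutely convergent. -/

import Mathlib

open MeasureTheory Set Filter

lemma lemA' {g : ℝ → ℝ} {S : Set ℝ} (hS : Convex ℝ S) {c s : ℝ} (hc : 0 < c)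
    (hder : ∀ t ∈ S, ∃ d, HasDerivAt g d t ∧ c ≤ d) :
    volume {t ∈ S | |g t| < s} ≤ ENNReal.ofReal (4 * s / c) := by
  set T := {t ∈ S | |g t| < s} with hT
  rcases T.eq_empty_or_nonempty with h | ⟨a, ha⟩
  · simp [h]
  have aux : ∀ t1 t2, t1 ∈ T → t2 ∈ T → t1 ≤ t2 → t2 - t1 ≤ 2 * s / c := by
    intro t1 t2 h1 h2 h12
    have hIcc : Icc t1 t2 ⊆ S := hS.ordConnected.out h1.1 h2.1
    have hmono : MonotoneOn (fun t => g t - t * c) (Icc t1 t2) := by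
      apply monotoneOn_of_deriv_nonneg (convex_Icc _ _)
      · intro x hx
        obtain ⟨d, hd, _⟩ := hder x (hIcc hx)
        exact ((hd.sub (hasDerivAt_mul_const c)).continuousAt).continuousWithinAt
      · intro x hx
        obtain ⟨d, hd, _⟩ := hder x (hIcc (interior_subset hx))
        exact (hd.sub (hasDerivAt_mul_const c)).differentiableAt.differentiableWithinAt
      · intro x hx
        obtain ⟨d, hd, hcd⟩ := hder x (hIcc (interior_subset hx))
        have := (hd.sub (hasDerivAt_mul_const c)).deriv
        rw [show deriv (fun t => g t - t * c) x = d - c from this]; linarith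
    have h1' := hmono (left_mem_Icc.2 h12) (right_mem_Icc.2 h12) h12
    simp only at h1'
    have hg1 := h1.2; have hg2 := h2.2
    have := le_abs_self (g t2); have := neg_abs_le (g t1)
    rw [le_div_iff₀ hc]
    nlinarith
  have hsub : T ⊆ Icc (a - 2 * s / c) (a + 2 * s / c) := by
    intro b hb
    rcases le_total b a with h | h
    · have := aux b a hb ha h
      constructor <;> [linarith; linarith [(div_nonneg (by nlinarith [abs_nonneg (g a), ha.2] : (0:ℝ) ≤ 2 * s) hc.le)]]
    · have := aux a b ha hb h
      constructor <;> [linarith [(div_nonneg (by nlinarith [abs_nonneg (g a), ha.2] : (0:ℝ) ≤ 2 * s) hc.le)]; linarith]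
  calc volume T ≤ volume (Icc (a - 2 * s / c) (a + 2 * s / c)) := measure_mono hsub
    _ = ENNReal.ofReal (a + 2 * s / c - (a - 2 * s / c)) := Real.volume_Icc
    _ = ENNReal.ofReal (4 * s / c) := by congr 1; ring

lemma coord_le_dist {N : ℕ} (x z : EuclideanSpace ℝ (Fin N)) (j : Fin N) :
    |x j - z j| ≤ dist x z := by
  rw [EuclideanSpace.dist_eq]
  have h1 : |x j - z j| = Real.sqrt (dist (x j) (z j) ^ 2) := by
    rw [Real.dist_eq, Real.sqrt_sq_eq_abs, abs_abs]
  rw [h1]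
  apply Real.sqrt_le_sqrt
  exact Finset.single_le_sum (f := fun i => dist (x i) (z i) ^ 2)
    (fun i _ => sq_nonneg _) (Finset.mem_univ j)

lemma lemB {M : ℕ} (i : Fin (M + 1)) (u : EuclideanSpace ℝ (Fin (M + 1)) → ℝ)
    (z : EuclideanSpace ℝ (Fin (M + 1))) (r c : ℝ) (hr : 0 ≤ r) (hc : 0 < c)
    (hder : ∀ x ∈ Metric.ball z r, ∃ D : EuclideanSpace ℝ (Fin (M + 1)) →L[ℝ] ℝ,
      HasFDerivAt u D x ∧ c ≤ D (EuclideanSpace.single i 1)) (s : ℝ) :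
    volume {x ∈ Metric.ball z r | |u x| < s} ≤
      ENNReal.ofReal (4 * s / c) * ENNReal.ofReal ((2 * r) ^ M) := by
  classical
  set T := {x ∈ Metric.ball z r | |u x| < s} with hTdef
  have hucont : ContinuousOn u (Metric.ball z r) := by
    intro x hx
    obtain ⟨D, hD, _⟩ := hder x hx
    exact hD.continuousAt.continuousWithinAt
  have hTopen : IsOpen T := by
    have : T = Metric.ball z r ∩ u ⁻¹' {y | |y| < s} := rfl
    rw [this]
    exact hucont.isOpen_inter_preimage Metric.isOpen_ball
      (isOpen_lt (by continuity) continuous_const)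
  have hTmeas : MeasurableSet T := hTopen.measurableSet
  set e1 := (MeasurableEquiv.toLp 2 (Fin (M + 1) → ℝ)).symm with he1
  set e2 := MeasurableEquiv.piFinSuccAbove (fun _ : Fin (M + 1) => ℝ) i with he2
  set E := e1.trans e2 with hE
  have mpE : MeasurePreserving (⇑E) volume volume := by
    have h1 := EuclideanSpace.volume_preserving_symm_measurableEquiv_toLp (Fin (M + 1))
    have h2 := MeasureTheory.volume_preserving_piFinSuccAbove (fun _ : Fin (M + 1) => ℝ) i
    exact h2.comp h1
  have mpEs : MeasurePreserving (⇑E.symm) volume volume := mpE.symm E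
  have hvol : volume ((⇑E.symm) ⁻¹' T) = volume T :=
    mpEs.measure_preimage hTmeas.nullMeasurableSet
  set S : Set (ℝ × (Fin M → ℝ)) := (⇑E.symm) ⁻¹' T with hSdef
  have hSmeas : MeasurableSet S := E.symm.measurable hTmeas
  have hcoord : ∀ (t : ℝ) (y : Fin M → ℝ) (j : Fin (M + 1)),
      (E.symm (t, y)) j = (Fin.insertNth (α := fun _ => ℝ) i t y) j := fun t y j => rfl
  set B : EuclideanSpace ℝ (Fin (M + 1)) := E.symm (1, 0) with hB
  have hBsingle : B = EuclideanSpace.single i 1 := by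
    ext j
    rw [hB, hcoord, EuclideanSpace.single_apply]
    by_cases hj : j = i
    · subst hj; simp
    · obtain ⟨k, hk⟩ := Fin.exists_succAbove_eq hj
      rw [← hk, Fin.insertNth_apply_succAbove]
      simp [Fin.succAbove_ne]
  have hline : ∀ (t : ℝ) (y : Fin M → ℝ),
      E.symm (t, y) = E.symm (0, y) + t • B := by
    intro t y
    ext j
    have hrhs : (E.symm (0, y) + t • B) j = (E.symm (0, y)) j + t * B j := rfl
    rw [hrhs, hcoord, hcoord, hB, hcoord]
    by_cases hj : j = i
    · subst hj; simp
    · obtain ⟨k, hk⟩ := Fin.exists_succAbove_eq hj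
      rw [← hk]
      simp [Fin.insertNth_apply_succAbove, Fin.succAbove_ne]
  -- slices
  have key : ∀ y : Fin M → ℝ,
      volume ((fun t => (t, y)) ⁻¹' S) ≤
        (Set.pi univ fun j : Fin M =>
          Icc (z (i.succAbove j) - r) (z (i.succAbove j) + r)).indicator
          (fun _ => ENNReal.ofReal (4 * s / c)) y := by
    intro y
    set box := Set.pi univ fun j : Fin M =>
      Icc (z (i.succAbove j) - r) (z (i.succAbove j) + r) with hbox
    set a : EuclideanSpace ℝ (Fin (M + 1)) := E.symm (0, y) with ha
    have hslice : (fun t => (t, y)) ⁻¹' S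
        = {t : ℝ | a + t • B ∈ Metric.ball z r ∧ |u (a + t • B)| < s} := by
      ext t
      simp only [hSdef, mem_preimage, mem_setOf_eq, hTdef]
      rw [← hline t y]
    by_cases hy : y ∈ box
    · rw [Set.indicator_of_mem hy, hslice]
      -- apply lemA' with S = {t | a + t • B ∈ ball}
      set S1 := {t : ℝ | a + t • B ∈ Metric.ball z r} with hS1
      have hconv : Convex ℝ S1 := by
        have : S1 = ⇑(AffineMap.lineMap a (a + B) : ℝ →ᵃ[ℝ] _) ⁻¹' Metric.ball z r := by
          ext t
          simp only [hS1, mem_setOf_eq, mem_preimage, AffineMap.lineMap_apply, vsub_eq_sub,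
            vadd_eq_add, add_sub_cancel_left]
          have h9 : a + t • B = t • B + a := add_comm _ _
          rw [h9]
        rw [this]
        exact (convex_ball z r).affine_preimage _
      have hder1 : ∀ t ∈ S1, ∃ d, HasDerivAt (fun t => u (a + t • B)) d t ∧ c ≤ d := by
        intro t ht
        obtain ⟨D, hD, hcD⟩ := hder (a + t • B) ht
        refine ⟨D B, ?_, by rwa [hBsingle]⟩
        have hl : HasDerivAt (fun t : ℝ => a + t • B) B t := by
          simpa using ((hasDerivAt_id t).smul_const B).const_add a
        exact (hD.comp_hasDerivAt t hl : _)
      have := lemA' (s := s) hconv hc hder1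
      calc volume {t : ℝ | a + t • B ∈ Metric.ball z r ∧ |u (a + t • B)| < s}
          = volume {t ∈ S1 | |u (a + t • B)| < s} := rfl
        _ ≤ ENNReal.ofReal (4 * s / c) := this
    · rw [Set.indicator_of_notMem hy]
      have : (fun t => (t, y)) ⁻¹' S = ∅ := by
        rw [eq_empty_iff_forall_notMem]
        intro t ht
        apply hy
        intro j _
        have hmem : E.symm (t, y) ∈ Metric.ball z r := by
          have := ht; rw [mem_preimage] at this; exact this.1
        have hd : |(E.symm (t, y)) (i.succAbove j) - z (i.succAbove j)| ≤ r :=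
          le_trans (coord_le_dist _ _ _) (le_of_lt (Metric.mem_ball.1 hmem))
        have hyj : (E.symm (t, y)) (i.succAbove j) = y j := by
          rw [hcoord, Fin.insertNth_apply_succAbove]
        rw [hyj] at hd
        rw [abs_le] at hd
        constructor <;> [linarith [hd.1]; linarith [hd.2]]
      rw [this]
      simp
  -- assemble
  have hbox_meas : MeasurableSet (Set.pi univ fun j : Fin M =>
      Icc (z (i.succAbove j) - r) (z (i.succAbove j) + r)) :=
    MeasurableSet.univ_pi fun j => measurableSet_Icc
  calc volume T = volume S := hvol.symm
    _ = (volume.prod volume) S := by rw [← Measure.volume_eq_prod]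
    _ = ∫⁻ y, volume ((fun t => (t, y)) ⁻¹' S) := Measure.prod_apply_symm hSmeas
    _ ≤ ∫⁻ y, (Set.pi univ fun j : Fin M =>
          Icc (z (i.succAbove j) - r) (z (i.succAbove j) + r)).indicator
          (fun _ => ENNReal.ofReal (4 * s / c)) y := lintegral_mono key
    _ = ENNReal.ofReal (4 * s / c) * volume (Set.pi univ fun j : Fin M =>
          Icc (z (i.succAbove j) - r) (z (i.succAbove j) + r)) := by
        rw [lintegral_indicator hbox_meas, setLIntegral_const]
    _ ≤ ENNReal.ofReal (4 * s / c) * ENNReal.ofReal ((2 * r) ^ M) := by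
        gcongr
        rw [volume_pi_pi]
        have : ∀ j : Fin M, volume (Icc (z (i.succAbove j) - r) (z (i.succAbove j) + r))
            = ENNReal.ofReal (2 * r) := by
          intro j; rw [Real.volume_Icc]; congr 1; ring
        simp only [this]
        rw [Finset.prod_const, ENNReal.ofReal_pow (by linarith)]
        simp

lemma lemBp {N : ℕ} {U : Set (EuclideanSpace ℝ (Fin N))} (hUo : IsOpen U)
    {u : EuclideanSpace ℝ (Fin N) → ℝ} (hu : ContDiffOn ℝ 1 u U)
    {z : EuclideanSpace ℝ (Fin N)} (hz : z ∈ U) (hgrad : gradient u z ≠ 0) :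
    ∃ r > 0, ∃ C : ℝ, 0 ≤ C ∧ Metric.ball z r ⊆ U ∧
      ∀ s : ℝ, 0 ≤ s → volume {x ∈ Metric.ball z r | |u x| < s} ≤ ENNReal.ofReal (C * s) := by
  -- nonzero coordinate of gradient
  obtain ⟨i, hi⟩ : ∃ i, gradient u z i ≠ 0 := by
    by_contra h
    push_neg at h
    exact hgrad (by ext j; exact h j)
  -- N must be a successor
  rcases N with _ | M
  · exact absurd (Subsingleton.elim (α := EuclideanSpace ℝ (Fin 0)) (gradient u z) 0) hgrad
  -- directional derivative
  have hdiff : ∀ x ∈ U, HasFDerivAt u (fderiv ℝ u x) x := by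
    intro x hx
    exact ((hu.differentiableOn one_ne_zero).differentiableAt (hUo.mem_nhds hx)).hasFDerivAt
  have hd0 : fderiv ℝ u z (EuclideanSpace.single i 1) = gradient u z i := by
    have h1 : fderiv ℝ u z = InnerProductSpace.toDual ℝ _ (gradient u z) := by
      rw [gradient]; simp
    rw [h1, InnerProductSpace.toDual_apply_apply]
    rw [EuclideanSpace.inner_single_right]
    simp
  set d : ℝ := gradient u z i with hdd
  -- continuity of fderiv applied to the direction
  have hcont : ContinuousOn (fun x => fderiv ℝ u x (EuclideanSpace.single i 1)) U := by
    have h1 := hu.continuousOn_fderiv_of_isOpen hUo le_rfl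
    exact (ContinuousLinearMap.apply ℝ ℝ (EuclideanSpace.single i 1)).continuous.comp_continuousOn h1
  -- choose r
  have hnhds : ∀ᶠ x in nhds z, x ∈ U ∧ |fderiv ℝ u x (EuclideanSpace.single i 1) - d| < |d| / 2 := by
    have h2 : ContinuousAt (fun x => fderiv ℝ u x (EuclideanSpace.single i 1)) z :=
      (hcont.continuousAt (hUo.mem_nhds hz))
    have h3 : ∀ᶠ x in nhds z, |fderiv ℝ u x (EuclideanSpace.single i 1) - d| < |d| / 2 := by
      have := Metric.tendsto_nhds.1 h2 (|d| / 2) (by positivity)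
      simpa [Real.dist_eq, hd0] using this
    exact (hUo.eventually_mem hz).and h3
  obtain ⟨r, hr, hball⟩ := Metric.eventually_nhds_iff_ball.1 hnhds
  have hd2 : (0:ℝ) < |d| / 2 := by positivity
  rcases lt_or_gt_of_ne hi with hneg | hpos
  · -- d < 0 : use -u
    refine ⟨r, hr, 4 / (|d| / 2) * (2 * r) ^ M, by positivity, fun x hx => (hball x hx).1, ?_⟩
    intro s hs
    have hder : ∀ x ∈ Metric.ball z r, ∃ D : EuclideanSpace ℝ (Fin (M + 1)) →L[ℝ] ℝ,
        HasFDerivAt (fun y => -u y) D x ∧ |d| / 2 ≤ D (EuclideanSpace.single i 1) := by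
      intro x hx
      obtain ⟨hxU, hxd⟩ := hball x hx
      refine ⟨-(fderiv ℝ u x), (hdiff x hxU).neg, ?_⟩
      simp only [ContinuousLinearMap.neg_apply]
      rw [abs_sub_lt_iff] at hxd
      have habs : |d| = -d := abs_of_neg hneg
      rw [habs] at hxd ⊢
      linarith [hxd.1, hxd.2]
    have hB := lemB i (fun y => -u y) z r (|d|/2) hr.le hd2 hder s
    have hsets : {x ∈ Metric.ball z r | |u x| < s}
        = {x ∈ Metric.ball z r | |(fun y => -u y) x| < s} := by
      ext x; simp [abs_neg]
    rw [hsets]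
    refine le_trans hB ?_
    rw [← ENNReal.ofReal_mul (by positivity)]
    apply ENNReal.ofReal_le_ofReal
    rw [div_mul_eq_mul_div, div_mul_eq_mul_div]
    ring_nf
    exact le_refl _
  · -- d > 0 : use u directly
    refine ⟨r, hr, 4 / (|d| / 2) * (2 * r) ^ M, by positivity, fun x hx => (hball x hx).1, ?_⟩
    intro s hs
    have hder : ∀ x ∈ Metric.ball z r, ∃ D : EuclideanSpace ℝ (Fin (M + 1)) →L[ℝ] ℝ,
        HasFDerivAt u D x ∧ |d| / 2 ≤ D (EuclideanSpace.single i 1) := by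
      intro x hx
      obtain ⟨hxU, hxd⟩ := hball x hx
      refine ⟨fderiv ℝ u x, hdiff x hxU, ?_⟩
      rw [abs_sub_lt_iff] at hxd
      have habs : |d| = d := abs_of_pos hpos
      rw [habs] at hxd ⊢
      linarith [hxd.1, hxd.2]
    have hB := lemB i u z r (|d|/2) hr.le hd2 hder s
    refine le_trans hB ?_
    rw [← ENNReal.ofReal_mul (by positivity)]
    apply ENNReal.ofReal_le_ofReal
    rw [div_mul_eq_mul_div, div_mul_eq_mul_div]
    ring_nf
    exact le_refl _

lemma lemC {N : ℕ} (Ω U : Set (EuclideanSpace ℝ (Fin N)))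
    (hΩb : Bornology.IsBounded Ω) (hUo : IsOpen U) (hΩU : closure Ω ⊆ U)
    (u : EuclideanSpace ℝ (Fin N) → ℝ) (hu : ContDiffOn ℝ 1 u U)
    (hnd : ∀ x ∈ closure Ω, u x = 0 → gradient u x ≠ 0) :
    ∃ C δ : ℝ, 0 < C ∧ 0 < δ ∧
      (∀ s : ℝ, 0 < s → s ≤ δ → volume {x ∈ Ω | |u x| < s} ≤ ENNReal.ofReal (C * s)) ∧
      volume {x ∈ Ω | u x = 0} = 0 := by
  classical
  have hKc : IsCompact (closure Ω) :=
    Metric.isCompact_of_isClosed_isBounded isClosed_closure hΩb.closure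
  have hucl : ContinuousOn u (closure Ω) := (hu.continuousOn).mono hΩU
  set Z := closure Ω ∩ u ⁻¹' {0} with hZ
  have hZclosed : IsClosed Z := hucl.preimage_isClosed_of_isClosed isClosed_closure
    isClosed_singleton
  have hZc : IsCompact Z := hKc.of_isClosed_subset hZclosed inter_subset_left
  have hprop : ∀ z ∈ Z, ∃ r > 0, ∃ C : ℝ, 0 ≤ C ∧ Metric.ball z r ⊆ U ∧
      ∀ s : ℝ, 0 ≤ s → volume {x ∈ Metric.ball z r | |u x| < s} ≤ ENNReal.ofReal (C * s) :=
    fun z hz => lemBp hUo hu (hΩU hz.1) (hnd z hz.1 hz.2)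
  choose! r hr C hC hbU hest using hprop
  have hcov : Z ⊆ ⋃ z ∈ Z, Metric.ball z (r z) := by
    intro z hz
    exact mem_biUnion hz (Metric.mem_ball_self (hr z hz))
  obtain ⟨b', hb'Z, hb'fin, hcover⟩ :=
    hZc.elim_finite_subcover_image (fun z _ => Metric.isOpen_ball) hcov
  set K' := closure Ω \ ⋃ z ∈ b', Metric.ball z (r z) with hK'
  have hK'c : IsCompact K' := hKc.diff (isOpen_biUnion fun z _ => Metric.isOpen_ball)
  -- find δ
  have hδ : ∃ δ : ℝ, 0 < δ ∧ ∀ x ∈ K', δ ≤ |u x| := by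
    rcases K'.eq_empty_or_nonempty with he | hne
    · exact ⟨1, one_pos, by rw [he]; simp⟩
    · obtain ⟨x₀, hx₀, hmin'⟩ := hK'c.exists_isMinOn hne ((hucl.mono diff_subset).abs)
      have hmin : ∀ x ∈ K', |u x₀| ≤ |u x| := fun x hx => hmin' hx
      refine ⟨|u x₀|, ?_, hmin⟩
      rcases (abs_nonneg (u x₀)).lt_or_eq with h | h
      · exact h
      · exfalso
        have hu0 : u x₀ = 0 := abs_eq_zero.1 h.symm
        have : x₀ ∈ Z := ⟨hx₀.1, by simpa using hu0⟩
        exact hx₀.2 (hcover this)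
  obtain ⟨δ, hδpos, hδlow⟩ := hδ
  set ht := hb'fin.toFinset with hht
  have hmain : ∀ s : ℝ, 0 < s → s ≤ δ → volume {x ∈ Ω | |u x| < s} ≤
      ENNReal.ofReal (((∑ z ∈ ht, C z) + 1) * s) := by
    intro s hs hsδ
    have hsub : {x ∈ Ω | |u x| < s} ⊆ ⋃ z ∈ ht, {x ∈ Metric.ball z (r z) | |u x| < s} := by
      intro x hx
      have hxcl : x ∈ closure Ω := subset_closure hx.1
      have hxK' : x ∉ K' := by
        intro hxK
        exact absurd hx.2 (not_lt.2 (le_trans hsδ (hδlow x hxK)))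
      have : x ∈ ⋃ z ∈ b', Metric.ball z (r z) := by
        by_contra hcon
        exact hxK' ⟨hxcl, hcon⟩
      obtain ⟨z, hz, hxz⟩ := mem_iUnion₂.1 this
      exact mem_iUnion₂.2 ⟨z, hb'fin.mem_toFinset.2 hz, hxz, hx.2⟩
    calc volume {x ∈ Ω | |u x| < s}
        ≤ volume (⋃ z ∈ ht, {x ∈ Metric.ball z (r z) | |u x| < s}) := measure_mono hsub
      _ ≤ ∑ z ∈ ht, volume {x ∈ Metric.ball z (r z) | |u x| < s} :=
          measure_biUnion_finset_le ht _
      _ ≤ ∑ z ∈ ht, ENNReal.ofReal (C z * s) := by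
          apply Finset.sum_le_sum
          intro z hz
          exact hest z (hb'Z (hb'fin.mem_toFinset.1 hz)) s hs.le
      _ = ENNReal.ofReal (∑ z ∈ ht, C z * s) := by
          rw [ENNReal.ofReal_sum_of_nonneg]
          intro z hz
          exact mul_nonneg (hC z (hb'Z (hb'fin.mem_toFinset.1 hz))) hs.le
      _ ≤ ENNReal.ofReal ((∑ z ∈ ht, C z + 1) * s) := by
          apply ENNReal.ofReal_le_ofReal
          rw [← Finset.sum_mul]
          nlinarith [hs]
  refine ⟨(∑ z ∈ ht, C z) + 1, δ, ?_, hδpos, hmain, ?_⟩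
  · have : 0 ≤ ∑ z ∈ ht, C z :=
      Finset.sum_nonneg fun z hz => hC z (hb'Z (hb'fin.mem_toFinset.1 hz))
    linarith
  · -- null zero set
    set C0 := (∑ z ∈ ht, C z) + 1 with hC0
    set μ0 := volume {x ∈ Ω | u x = 0} with hμ0
    have hbnd : ∀ᶠ s : ℝ in nhdsWithin 0 (Ioi 0), μ0 ≤ ENNReal.ofReal (C0 * s) := by
      have h1 : ∀ᶠ s : ℝ in nhdsWithin 0 (Ioi 0), s < δ :=
        eventually_nhdsWithin_of_eventually_nhds
          (isOpen_Iio.eventually_mem (show (0:ℝ) ∈ Iio δ from hδpos))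
      filter_upwards [h1, eventually_mem_nhdsWithin] with s hsδ hs
      refine le_trans (measure_mono ?_) (hmain s hs hsδ.le)
      exact fun x hx => (⟨hx.1, by rw [hx.2]; simpa using (hs : (0:ℝ) < s)⟩ :
        x ∈ {x ∈ Ω | |u x| < s})
    have htend : Tendsto (fun s : ℝ => ENNReal.ofReal (C0 * s)) (nhdsWithin 0 (Ioi 0))
        (nhds 0) := by
      have h2 : Tendsto (fun s : ℝ => C0 * s) (nhdsWithin 0 (Ioi 0)) (nhds 0) := by
        have h3 : Continuous (fun s : ℝ => C0 * s) := continuous_const.mul continuous_id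
        have := h3.tendsto (0:ℝ)
        simpa using this.mono_left nhdsWithin_le_nhds
      simpa using ENNReal.tendsto_ofReal h2
    have := ge_of_tendsto htend hbnd
    simpa using this

lemma pow_rpow_comm (x : ℝ) (hx : 0 ≤ x) (y : ℝ) (n : ℕ) :
    ((x ^ n : ℝ)) ^ y = (x ^ y) ^ n := by
  rw [← Real.rpow_natCast x n, ← Real.rpow_natCast (x ^ y) n, ← Real.rpow_mul hx,
    ← Real.rpow_mul hx, mul_comm]

lemma lemE {N : ℕ} (Ω : Set (EuclideanSpace ℝ (Fin N))) (hΩo : IsOpen Ω)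
    (hΩb : Bornology.IsBounded Ω) (u : EuclideanSpace ℝ (Fin N) → ℝ)
    (hucont : ContinuousOn u Ω) (q : ℝ) (hq1 : 1 < q) (hq2 : q < 2)
    (C δ : ℝ) (hCpos : 0 < C) (hδpos : 0 < δ)
    (hbound : ∀ s : ℝ, 0 < s → s ≤ δ → volume {x ∈ Ω | |u x| < s} ≤ ENNReal.ofReal (C * s)) :
    IntegrableOn (fun x => |u x| ^ (q - 2)) Ω := by
  have hmeasAE : AEMeasurable u (volume.restrict Ω) := hucont.aemeasurable hΩo.measurableSet
  have houter : Measurable (fun y : ℝ => |y| ^ (q - 2)) := measurable_id.abs.pow_const _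
  have hgAE : AEStronglyMeasurable (fun x => |u x| ^ (q - 2)) (volume.restrict Ω) :=
    (houter.comp_aemeasurable hmeasAE).aestronglyMeasurable
  refine ⟨hgAE, ?_⟩
  rw [hasFiniteIntegral_iff_ofReal (ae_of_all _ fun x => Real.rpow_nonneg (abs_nonneg _) _)]
  set P : EuclideanSpace ℝ (Fin N) → ENNReal := fun x => ENNReal.ofReal (|u x| ^ (q - 2))
    with hP
  set S0 := {x ∈ Ω | δ ≤ |u x|} with hS0
  set SZ := {x ∈ Ω | u x = 0} with hSZ
  set A : ℕ → Set (EuclideanSpace ℝ (Fin N)) := fun n =>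
    {x ∈ Ω | δ * (1/2) ^ (n+1) ≤ |u x| ∧ |u x| < δ * (1/2) ^ n} with hA
  have hcover : Ω ⊆ S0 ∪ (SZ ∪ ⋃ n, A n) := by
    intro x hx
    rcases le_or_gt δ (|u x|) with h | h
    · exact Or.inl ⟨hx, h⟩
    rcases eq_or_ne (u x) 0 with h0 | h0
    · exact Or.inr (Or.inl ⟨hx, h0⟩)
    have hpos : 0 < |u x| := abs_pos.2 h0
    have hex : ∃ n : ℕ, δ * (1/2) ^ n ≤ |u x| := by
      obtain ⟨n, hn⟩ := exists_pow_lt_of_lt_one (div_pos hpos hδpos)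
        (by norm_num : (1:ℝ)/2 < 1)
      refine ⟨n, le_of_lt ?_⟩
      have h2 := (lt_div_iff₀ hδpos).1 hn
      rw [mul_comm]; exact h2
    have hn0 : Nat.find hex ≠ 0 := by
      intro h'
      have hs := Nat.find_spec hex
      rw [h'] at hs
      simp at hs
      linarith
    obtain ⟨m, hm⟩ : ∃ m, Nat.find hex = m + 1 := ⟨Nat.find hex - 1, by omega⟩
    refine Or.inr (Or.inr (mem_iUnion.2 ⟨m, hx, ?_, ?_⟩))
    · have hs := Nat.find_spec hex; rwa [hm] at hs
    · have hmin := Nat.find_min hex (m := m) (by omega)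
      push_neg at hmin
      exact hmin
  have hΩfin : volume Ω < ⊤ := hΩb.measure_lt_top
  have hbound0 : ∫⁻ x in S0, P x ≤ ENNReal.ofReal (δ ^ (q-2)) * volume Ω := by
    calc ∫⁻ x in S0, P x
        ≤ ∫⁻ _x in S0, ENNReal.ofReal (δ ^ (q-2)) := by
          refine setLIntegral_mono measurable_const fun x hx => ?_
          exact ENNReal.ofReal_le_ofReal
            (Real.rpow_le_rpow_of_nonpos hδpos hx.2 (by linarith))
      _ = ENNReal.ofReal (δ^(q-2)) * volume S0 := setLIntegral_const _ _
      _ ≤ ENNReal.ofReal (δ^(q-2)) * volume Ω := by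
          gcongr
          exact fun x hx => hx.1
  have hboundZ : ∫⁻ x in SZ, P x = 0 := by
    refine le_antisymm ?_ zero_le
    have hz : ∀ x ∈ SZ, P x ≤ 0 := by
      intro x hx
      have : |u x| ^ (q - 2) = 0 := by
        rw [hx.2]
        simp [Real.zero_rpow (show q - 2 ≠ 0 by intro hcon; linarith)]
      simp [hP, this]
    calc ∫⁻ x in SZ, P x ≤ ∫⁻ _x in SZ, 0 := setLIntegral_mono measurable_const hz
      _ = 0 := by simp
  set ρ := ((1:ℝ)/2) ^ (q-1) with hρ
  set K := δ ^ (q-2) * (1/2 : ℝ) ^ (q-2) * (C * δ) with hK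
  have hρ0 : (0:ℝ) ≤ ρ := Real.rpow_nonneg (by norm_num) _
  have hρ1 : ρ < 1 := Real.rpow_lt_one (by norm_num) (by norm_num) (by linarith)
  have hKnn : 0 ≤ K := by
    apply mul_nonneg (mul_nonneg (Real.rpow_nonneg hδpos.le _) (Real.rpow_nonneg (by norm_num) _))
    positivity
  have hboundA : ∀ n : ℕ, ∫⁻ x in A n, P x ≤ ENNReal.ofReal (K * ρ ^ n) := by
    intro n
    have hl : (0:ℝ) < δ * (1/2) ^ (n+1) := by positivity
    have h1 : ∫⁻ x in A n, P x ≤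
        ENNReal.ofReal ((δ * (1/2)^(n+1)) ^ (q-2)) * volume (A n) := by
      calc ∫⁻ x in A n, P x
          ≤ ∫⁻ _x in A n, ENNReal.ofReal ((δ * (1/2)^(n+1)) ^ (q-2)) := by
            refine setLIntegral_mono measurable_const fun x hx => ?_
            exact ENNReal.ofReal_le_ofReal
              (Real.rpow_le_rpow_of_nonpos hl hx.2.1 (by linarith))
        _ = _ := setLIntegral_const _ _
    have h2 : volume (A n) ≤ ENNReal.ofReal (C * (δ * (1/2)^n)) := by
      refine le_trans (measure_mono (fun x hx => ⟨hx.1, hx.2.2⟩ :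
        A n ⊆ {x ∈ Ω | |u x| < δ * (1/2)^n})) (hbound _ (by positivity) ?_)
      calc δ * (1/2:ℝ)^n ≤ δ * 1 := by
            gcongr
            exact pow_le_one₀ (by norm_num) (by norm_num)
        _ = δ := mul_one δ
    calc ∫⁻ x in A n, P x
        ≤ ENNReal.ofReal ((δ * (1/2)^(n+1)) ^ (q-2)) * ENNReal.ofReal (C * (δ * (1/2)^n)) := by
          exact le_trans h1 (by gcongr)
      _ = ENNReal.ofReal ((δ * (1/2)^(n+1)) ^ (q-2) * (C * (δ * (1/2)^n))) :=
          (ENNReal.ofReal_mul (Real.rpow_nonneg hl.le _)).symm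
      _ = ENNReal.ofReal (K * ρ ^ n) := by
          congr 1
          have e1 : (δ * (1/2:ℝ)^(n+1)) ^ (q-2) = δ^(q-2) * ((1/2:ℝ)^(q-2))^(n+1) := by
            rw [Real.mul_rpow hδpos.le (by positivity), pow_rpow_comm _ (by norm_num)]
          rw [e1, pow_succ]
          have e2 : (((1/2:ℝ)^(q-2))^n * ((1/2:ℝ))^n) = ρ ^ n := by
            rw [← mul_pow]
            congr 1
            have hq21 : q - 1 = (q - 2) + 1 := by ring
            rw [hρ, hq21, Real.rpow_add_one (by norm_num : (1/2:ℝ) ≠ 0)]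
          calc δ^(q-2) * (((1/2:ℝ)^(q-2))^n * (1/2:ℝ)^(q-2)) * (C*(δ*(1/2)^n))
              = K * (((1/2:ℝ)^(q-2))^n * (1/2:ℝ)^n) := by rw [hK]; ring
            _ = K * ρ^n := by rw [e2]
  have hsum : ∑' n, ENNReal.ofReal (K * ρ ^ n) < ⊤ := by
    have hsummable : Summable (fun n : ℕ => K * ρ ^ n) :=
      (summable_geometric_of_lt_one hρ0 hρ1).mul_left K
    rw [← ENNReal.ofReal_tsum_of_nonneg (fun n => mul_nonneg hKnn (pow_nonneg hρ0 n)) hsummable]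
    exact ENNReal.ofReal_lt_top
  calc ∫⁻ x in Ω, P x
      ≤ ∫⁻ x in S0 ∪ (SZ ∪ ⋃ n, A n), P x := lintegral_mono_set hcover
    _ ≤ (∫⁻ x in S0, P x) + ∫⁻ x in SZ ∪ ⋃ n, A n, P x := lintegral_union_le _ _ _
    _ ≤ (∫⁻ x in S0, P x) + ((∫⁻ x in SZ, P x) + ∫⁻ x in ⋃ n, A n, P x) := by
        gcongr
        exact lintegral_union_le _ _ _
    _ ≤ ENNReal.ofReal (δ ^ (q-2)) * volume Ω + (0 + ∑' n, ENNReal.ofReal (K * ρ ^ n)) := by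
        gcongr
        · exact hboundZ.le
        · exact le_trans (lintegral_iUnion_le _ _) (ENNReal.tsum_le_tsum hboundA)
    _ < ⊤ := by
        rw [zero_add]
        exact ENNReal.add_lt_top.2 ⟨ENNReal.mul_lt_top ENNReal.ofReal_lt_top hΩfin, hsum⟩

lemma hasDerivAt_absrpow {q : ℝ} (hq1 : 1 < q) (hq2 : q < 2) {a : ℝ} (ha : a ≠ 0) :
    HasDerivAt (fun t : ℝ => |t| ^ (q-2) * t) ((q-1) * |a| ^ (q-2)) a := by
  have hq21 : q - 1 = (q - 2) + 1 := by ring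
  rcases ha.lt_or_gt with hneg | hpos
  · -- a < 0
    have habs : |a| = -a := abs_of_neg hneg
    have h1 : HasDerivAt (fun x : ℝ => x ^ (q-1)) ((q-1) * (-a) ^ (q-2)) (-a) := by
      have := Real.hasDerivAt_rpow_const (x := -a) (p := q-1) (Or.inl (neg_ne_zero.2 ha))
      convert this using 2
      ring
    have h2 : HasDerivAt (fun t : ℝ => -t) (-1 : ℝ) a := (hasDerivAt_id a).neg
    have h3 : HasDerivAt (fun t : ℝ => ((-t) ^ (q-1) : ℝ)) ((q-1) * (-a) ^ (q-2) * (-1)) a :=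
      HasDerivAt.comp a h1 h2
    have h4 : HasDerivAt (fun t : ℝ => -((-t) ^ (q-1) : ℝ)) ((q-1) * (-a) ^ (q-2)) a := by
      have := h3.neg
      rw [show -((q-1) * (-a) ^ (q-2) * (-1)) = (q-1) * (-a) ^ (q-2) by ring] at this
      exact this
    rw [habs]
    refine h4.congr_of_eventuallyEq ?_
    filter_upwards [isOpen_Iio.eventually_mem (show a ∈ Iio (0:ℝ) from hneg)] with t ht
    have ht' : (t:ℝ) < 0 := ht
    have : |t| = -t := abs_of_neg ht'
    rw [this, hq21, Real.rpow_add_one (neg_ne_zero.2 ht'.ne)]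
    ring
  · -- a > 0
    have habs : |a| = a := abs_of_pos hpos
    have h1 : HasDerivAt (fun x : ℝ => x ^ (q-1)) ((q-1) * a ^ (q-2)) a := by
      have := Real.hasDerivAt_rpow_const (x := a) (p := q-1) (Or.inl ha)
      convert this using 2
      ring
    rw [habs]
    refine h1.congr_of_eventuallyEq ?_
    filter_upwards [isOpen_Ioi.eventually_mem (show a ∈ Ioi (0:ℝ) from hpos)] with t ht
    have ht' : (0:ℝ) < t := ht
    rw [abs_of_pos ht', hq21, Real.rpow_add_one ht'.ne']

lemma abs_absrpow {q : ℝ} (hq1 : 1 < q) (hq2 : q < 2) (x : ℝ) :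
    |(|x|) ^ (q-2) * x| = |x| ^ (q-1) := by
  rcases eq_or_ne x 0 with h | h
  · rw [h]
    simp [Real.zero_rpow (show q - 2 ≠ 0 by intro hc; linarith),
      Real.zero_rpow (show q - 1 ≠ 0 by intro hc; linarith)]
  · rw [abs_mul, abs_of_nonneg (Real.rpow_nonneg (abs_nonneg _) _),
      show q - 1 = (q-2) + 1 by ring, Real.rpow_add_one (abs_ne_zero.2 h)]

lemma diff_bound {q : ℝ} (hq1 : 1 < q) (hq2 : q < 2) {a h : ℝ} (ha : a ≠ 0) :
    |(|a + h|) ^ (q-2) * (a + h) - |a| ^ (q-2) * a| ≤ (q + 4) * ((|a|/2) ^ (q-2)) * |h| := by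
  have hapos : 0 < |a| := abs_pos.2 ha
  have ha2 : (0:ℝ) < |a| / 2 := by linarith
  rcases le_or_gt (|h|) (|a|/2) with hle | hlt
  · -- mean value case
    set f : ℝ → ℝ := fun t => |t| ^ (q-2) * t with hf
    have hseg : ∀ ξ ∈ segment ℝ a (a + h), |a|/2 ≤ |ξ| := by
      intro ξ hξ
      rw [segment_eq_image'] at hξ
      obtain ⟨t, ht, rfl⟩ := hξ
      have h1 : |t • (a + h - a)| ≤ |h| := by
        rw [smul_eq_mul, abs_mul, add_sub_cancel_left]
        calc |t| * |h| ≤ 1 * |h| := by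
              gcongr
              rw [abs_of_nonneg ht.1]; exact ht.2
          _ = |h| := one_mul _
      have h2 : |a| - |a + t • (a + h - a)| ≤ |t • (a + h - a)| := by
        have h3 := abs_sub_abs_le_abs_sub a (a + t • (a + h - a))
        have h4 : a - (a + t • (a + h - a)) = -(t • (a + h - a)) := by ring
        rw [h4, abs_neg] at h3
        exact h3
      linarith
    have hder : ∀ ξ ∈ segment ℝ a (a + h),
        HasDerivWithinAt f ((q-1) * |ξ| ^ (q-2)) (segment ℝ a (a + h)) ξ := by
      intro ξ hξ
      have hξ0 : ξ ≠ 0 := by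
        intro hc
        rw [hc] at hξ
        have := hseg 0 hξ
        simp at this
        linarith
      exact (hasDerivAt_absrpow hq1 hq2 hξ0).hasDerivWithinAt
    have hbound : ∀ ξ ∈ segment ℝ a (a + h),
        ‖(q-1) * |ξ| ^ (q-2)‖ ≤ (q-1) * ((|a|/2) ^ (q-2)) := by
      intro ξ hξ
      rw [Real.norm_eq_abs, abs_of_nonneg (mul_nonneg (by linarith)
        (Real.rpow_nonneg (abs_nonneg _) _))]
      have := Real.rpow_le_rpow_of_nonpos ha2 (hseg ξ hξ) (show q - 2 ≤ 0 by linarith)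
      exact mul_le_mul_of_nonneg_left this (by linarith)
    have := Convex.norm_image_sub_le_of_norm_hasDerivWithin_le hder hbound
      (convex_segment a (a + h)) (left_mem_segment ℝ a (a + h))
      (right_mem_segment ℝ a (a + h))
    rw [Real.norm_eq_abs, Real.norm_eq_abs, add_sub_cancel_left] at this
    calc |(|a + h|) ^ (q-2) * (a + h) - |a| ^ (q-2) * a| ≤ (q-1) * ((|a|/2) ^ (q-2)) * |h| := this
      _ ≤ (q + 4) * ((|a|/2) ^ (q-2)) * |h| := by
          have hX : (0:ℝ) ≤ (|a|/2) ^ (q-2) := Real.rpow_nonneg ha2.le _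
          nlinarith [mul_nonneg hX (abs_nonneg h)]
  · -- small a case
    have hh0 : h ≠ 0 := by
      intro hc; rw [hc] at hlt; simp at hlt; linarith
    have hhpos : 0 < |h| := abs_pos.2 hh0
    have h1 : |(|a + h|) ^ (q-2) * (a + h) - |a| ^ (q-2) * a|
        ≤ |a + h| ^ (q-1) + |a| ^ (q-1) := by
      calc |(|a + h|) ^ (q-2) * (a + h) - |a| ^ (q-2) * a|
          ≤ |(|a + h|) ^ (q-2) * (a + h)| + |(|a|) ^ (q-2) * a| := abs_sub _ _
        _ = |a + h| ^ (q-1) + |a| ^ (q-1) := by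
            rw [abs_absrpow hq1 hq2, abs_absrpow hq1 hq2]
    have h2 : |a + h| ^ (q-1) ≤ 3 * |h| ^ (q-1) := by
      calc |a + h| ^ (q-1) ≤ (3 * |h|) ^ (q-1) := by
            apply Real.rpow_le_rpow (abs_nonneg _) _ (by linarith)
            calc |a + h| ≤ |a| + |h| := abs_add_le _ _
              _ ≤ 3 * |h| := by linarith
        _ = 3 ^ (q-1) * |h| ^ (q-1) := Real.mul_rpow (by norm_num) (abs_nonneg _)
        _ ≤ 3 * |h| ^ (q-1) := by
            have hY : (0:ℝ) ≤ |h| ^ (q-1) := Real.rpow_nonneg (abs_nonneg _) _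
            have h3q : (3:ℝ) ^ (q-1) ≤ 3 := by
              calc (3:ℝ) ^ (q-1) ≤ 3 ^ (1:ℝ) :=
                    Real.rpow_le_rpow_of_exponent_le (by norm_num) (by linarith)
                _ = 3 := Real.rpow_one 3
            exact mul_le_mul_of_nonneg_right h3q hY
    have h3 : |a| ^ (q-1) ≤ 2 * |h| ^ (q-1) := by
      calc |a| ^ (q-1) ≤ (2 * |h|) ^ (q-1) := by
            apply Real.rpow_le_rpow (abs_nonneg _) _ (by linarith)
            linarith
        _ = 2 ^ (q-1) * |h| ^ (q-1) := Real.mul_rpow (by norm_num) (abs_nonneg _)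
        _ ≤ 2 * |h| ^ (q-1) := by
            have hY : (0:ℝ) ≤ |h| ^ (q-1) := Real.rpow_nonneg (abs_nonneg _) _
            have h2q : (2:ℝ) ^ (q-1) ≤ 2 := by
              calc (2:ℝ) ^ (q-1) ≤ 2 ^ (1:ℝ) :=
                    Real.rpow_le_rpow_of_exponent_le (by norm_num) (by linarith)
                _ = 2 := Real.rpow_one 2
            exact mul_le_mul_of_nonneg_right h2q hY
    have h4 : |h| ^ (q-1) = |h| ^ (q-2) * |h| := by
      rw [show q - 1 = (q-2) + 1 by ring, Real.rpow_add_one (abs_ne_zero.2 hh0)]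
    have h5 : |h| ^ (q-2) ≤ (|a|/2) ^ (q-2) :=
      Real.rpow_le_rpow_of_nonpos ha2 hlt.le (by linarith)
    calc |(|a + h|) ^ (q-2) * (a + h) - |a| ^ (q-2) * a|
        ≤ |a + h| ^ (q-1) + |a| ^ (q-1) := h1
      _ ≤ 5 * |h| ^ (q-1) := by linarith
      _ = 5 * |h| ^ (q-2) * |h| := by rw [h4]; ring
      _ ≤ 5 * ((|a|/2) ^ (q-2)) * |h| :=
          mul_le_mul_of_nonneg_right (mul_le_mul_of_nonneg_left h5 (by norm_num)) (abs_nonneg _)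
      _ ≤ (q + 4) * ((|a|/2) ^ (q-2)) * |h| := by
          have hX : (0:ℝ) ≤ (|a|/2) ^ (q-2) := Real.rpow_nonneg ha2.le _
          nlinarith [mul_nonneg hX (abs_nonneg h)]

/-- Second directional derivative of the map `u ↦ (1/q)∫|u|^q`: for `u ∈ C¹(U)`
with nondegenerate zeros on `closure Ω` and bounded measurable `v, w`, the difference quotient
`(1/t)∫_Ω (|u+tw|^{q-2}(u+tw) - |u|^{q-2}u) v dx` converges as `t → 0` to
`(q-1)∫_Ω |u|^{q-2} v w dx`, the latter integral being absolutely convergent. -/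
theorem statement10 {N : ℕ} (Ω U : Set (EuclideanSpace ℝ (Fin N)))
    (hΩo : IsOpen Ω) (hΩb : Bornology.IsBounded Ω)
    (hUo : IsOpen U) (hΩU : closure Ω ⊆ U)
    (q : ℝ) (hq1 : 1 < q) (hq2 : q < 2)
    (u : EuclideanSpace ℝ (Fin N) → ℝ) (hu : ContDiffOn ℝ 1 u U)
    (hnd : ∀ x ∈ closure Ω, u x = 0 → gradient u x ≠ 0)
    (v w : EuclideanSpace ℝ (Fin N) → ℝ)
    (hv : Measurable v) (hvb : ∃ C : ℝ, ∀ x ∈ Ω, |v x| ≤ C)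
    (hw : Measurable w) (hwb : ∃ C : ℝ, ∀ x ∈ Ω, |w x| ≤ C) :
    IntegrableOn (fun x => |u x| ^ (q - 2) * v x * w x) Ω ∧
    Tendsto (fun t : ℝ => (1 / t) *
        ∫ x in Ω, (|u x + t * w x| ^ (q - 2) * (u x + t * w x) - |u x| ^ (q - 2) * u x) * v x)
      (nhdsWithin 0 {0}ᶜ)
      (nhds ((q - 1) * ∫ x in Ω, |u x| ^ (q - 2) * v x * w x)) := by
  classical
  obtain ⟨C, δ, hCpos, hδpos, hbound, hnull⟩ := lemC Ω U hΩb hUo hΩU u hu hnd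
  have hΩU' : Ω ⊆ U := fun x hx => hΩU (subset_closure hx)
  have hucont : ContinuousOn u Ω := (hu.continuousOn).mono hΩU'
  have hg : IntegrableOn (fun x => |u x| ^ (q - 2)) Ω :=
    lemE Ω hΩo hΩb u hucont q hq1 hq2 C δ hCpos hδpos hbound
  obtain ⟨Cv, hCv⟩ := hvb
  obtain ⟨Cw, hCw⟩ := hwb
  set Cv' := max Cv 0 with hCv'
  set Cw' := max Cw 0 with hCw'
  have hCv2 : ∀ x ∈ Ω, |v x| ≤ Cv' := fun x hx => le_trans (hCv x hx) (le_max_left _ _)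
  have hCw2 : ∀ x ∈ Ω, |w x| ≤ Cw' := fun x hx => le_trans (hCw x hx) (le_max_left _ _)
  have hCv'0 : 0 ≤ Cv' := le_max_right _ _
  have hCw'0 : 0 ≤ Cw' := le_max_right _ _
  -- bounded multiplier
  have hmul : ∀ (b : EuclideanSpace ℝ (Fin N) → ℝ), Measurable b →
      (∃ Cb : ℝ, ∀ x ∈ Ω, |b x| ≤ Cb) →
      IntegrableOn (fun x => b x * |u x| ^ (q - 2)) Ω := by
    rintro b hb ⟨Cb, hCb⟩
    refine Integrable.bdd_mul (c := Cb) hg hb.aestronglyMeasurable ?_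
    refine (ae_restrict_iff' hΩo.measurableSet).2 (ae_of_all _ fun x hx => ?_)
    rw [Real.norm_eq_abs]
    exact hCb x hx
  have hpart1 : IntegrableOn (fun x => |u x| ^ (q - 2) * v x * w x) Ω := by
    have heq : (fun x => |u x| ^ (q - 2) * v x * w x)
        = fun x => (v x * w x) * |u x| ^ (q - 2) := by funext x; ring
    rw [heq]
    refine hmul _ (hv.mul hw) ⟨Cv' * Cw', fun x hx => ?_⟩
    rw [abs_mul]
    exact mul_le_mul (hCv2 x hx) (hCw2 x hx) (abs_nonneg _)
      (le_trans (abs_nonneg _) (hCv2 x hx))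
  refine ⟨hpart1, ?_⟩
  -- part 2
  set φ : ℝ → ℝ := fun y => |y| ^ (q - 2) * y with hφ
  have hφm : Measurable φ := (measurable_id.abs.pow_const _).mul measurable_id
  set F : ℝ → EuclideanSpace ℝ (Fin N) → ℝ :=
    fun t x => (1 / t) * ((φ (u x + t * w x) - φ (u x)) * v x) with hF
  have hFeq : (fun t : ℝ => (1 / t) *
      ∫ x in Ω, (|u x + t * w x| ^ (q - 2) * (u x + t * w x) - |u x| ^ (q - 2) * u x) * v x)
      = fun t => ∫ x in Ω, F t x := by
    funext t
    rw [hF]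
    simp only [hφ]
    rw [← integral_const_mul]
  have huae : AEMeasurable u (volume.restrict Ω) := hucont.aemeasurable hΩo.measurableSet
  -- a.e. nonvanishing
  have hae2 : ∀ᵐ x ∂(volume.restrict Ω), u x ≠ 0 := by
    rw [ae_iff]
    have h1 : {x | ¬ u x ≠ 0} = {x | u x = 0} := by simp
    rw [h1, Measure.restrict_apply' hΩo.measurableSet]
    refine measure_mono_null (fun x hx => ?_) hnull
    exact ⟨hx.2, hx.1⟩
  have hae1 : ∀ᵐ x ∂(volume.restrict Ω), x ∈ Ω := ae_restrict_mem hΩo.measurableSet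
  -- half rpow identity
  have hhalf : ∀ a : ℝ, (|a|/2) ^ (q-2) = (2:ℝ)^(2-q) * |a| ^ (q-2) := by
    intro a
    rw [Real.div_rpow (abs_nonneg _) (by norm_num), div_eq_mul_inv]
    rw [show (2:ℝ)^(2-q) = ((2:ℝ)^(q-2))⁻¹ by
      rw [show (2:ℝ)-q = -(q-2) by ring, Real.rpow_neg (by norm_num)]]
    ring
  set K := (q + 4) * (2:ℝ)^(2-q) * (Cw' * Cv') with hK
  set bound : EuclideanSpace ℝ (Fin N) → ℝ := fun x => K * |u x| ^ (q - 2) with hbd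
  have hboundint : Integrable bound (volume.restrict Ω) := by
    rw [hbd]
    have heq : (fun x => K * |u x| ^ (q-2)) = fun x => (fun _ => K) x * |u x| ^ (q-2) := rfl
    rw [heq]
    exact hmul _ measurable_const ⟨|K|, fun x _ => le_refl |K|⟩
  -- measurability of F t
  have hFmeas : ∀ t : ℝ, AEStronglyMeasurable (F t) (volume.restrict Ω) := by
    intro t
    have h1 : AEMeasurable (fun x => u x + t * w x) (volume.restrict Ω) :=
      huae.add ((hw.const_mul t).aemeasurable)
    have h2 : AEMeasurable (fun x => φ (u x + t * w x)) (volume.restrict Ω) :=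
      hφm.comp_aemeasurable h1
    have h3 : AEMeasurable (fun x => φ (u x)) (volume.restrict Ω) :=
      hφm.comp_aemeasurable huae
    exact ((((h2.sub h3).mul hv.aemeasurable).const_mul (1/t)).aestronglyMeasurable)
  -- bound
  have hbound' : ∀ᶠ t in nhdsWithin (0:ℝ) {0}ᶜ,
      ∀ᵐ x ∂(volume.restrict Ω), ‖F t x‖ ≤ bound x := by
    filter_upwards [eventually_mem_nhdsWithin] with t ht
    have htne : t ≠ 0 := ht
    filter_upwards [hae1, hae2] with x hxΩ hux0
    have hD := diff_bound hq1 hq2 (a := u x) (h := t * w x) hux0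
    have htabs : (0:ℝ) < |t| := abs_pos.2 htne
    rw [Real.norm_eq_abs, hF]
    rw [abs_mul, abs_mul]
    have e1 : |1/t| = 1/|t| := by rw [abs_div, abs_one]
    have hP : (0:ℝ) ≤ (|u x|/2) ^ (q-2) := Real.rpow_nonneg (by positivity) _
    have step1 : |φ (u x + t * w x) - φ (u x)| * |v x|
        ≤ ((q + 4) * ((|u x|/2) ^ (q-2)) * (|t| * |w x|)) * |v x| := by
      apply mul_le_mul_of_nonneg_right _ (abs_nonneg _)
      calc |φ (u x + t * w x) - φ (u x)|
          ≤ (q + 4) * ((|u x|/2) ^ (q-2)) * |t * w x| := hD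
        _ = (q + 4) * ((|u x|/2) ^ (q-2)) * (|t| * |w x|) := by rw [abs_mul]
    calc |1/t| * (|φ (u x + t * w x) - φ (u x)| * |v x|)
        ≤ |1/t| * (((q + 4) * ((|u x|/2) ^ (q-2)) * (|t| * |w x|)) * |v x|) :=
          mul_le_mul_of_nonneg_left step1 (abs_nonneg _)
      _ = (q + 4) * ((|u x|/2) ^ (q-2)) * (|w x| * |v x|) := by
          rw [e1]
          field_simp
      _ ≤ (q + 4) * ((|u x|/2) ^ (q-2)) * (Cw' * Cv') := by
          apply mul_le_mul_of_nonneg_left _ (by positivity)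
          exact mul_le_mul (hCw2 x hxΩ) (hCv2 x hxΩ) (abs_nonneg _)
            (le_trans (abs_nonneg _) (hCw2 x hxΩ))
      _ = bound x := by
          rw [hbd, hK, hhalf]
          ring
  -- pointwise limit
  set flim : EuclideanSpace ℝ (Fin N) → ℝ :=
    fun x => ((q-1) * |u x| ^ (q-2) * w x) * v x with hflim
  have hlim : ∀ᵐ x ∂(volume.restrict Ω),
      Tendsto (fun t => F t x) (nhdsWithin (0:ℝ) {0}ᶜ) (nhds (flim x)) := by
    filter_upwards [hae2] with x hux0
    set g : ℝ → ℝ := fun t => φ (u x + t * w x) with hg'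
    have hinner : HasDerivAt (fun t : ℝ => u x + t * w x) (w x) 0 :=
      (hasDerivAt_mul_const (w x)).const_add (u x)
    have houter : HasDerivAt φ ((q-1) * |u x| ^ (q-2)) (u x + 0 * w x) := by
      rw [show u x + 0 * w x = u x by ring]
      exact hasDerivAt_absrpow hq1 hq2 hux0
    have hcomp : HasDerivAt g ((q-1) * |u x| ^ (q-2) * w x) 0 := by
      have := HasDerivAt.comp (0:ℝ) houter hinner
      exact this
    have hslope := hasDerivAt_iff_tendsto_slope.1 hcomp
    have := hslope.mul_const (v x)
    refine this.congr fun t => ?_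
    rw [slope_def_field, hF, hg']
    simp only
    have hg0 : u x + 0 * w x = u x := by ring
    rw [hg0, sub_zero]
    field_simp
  have hDCT := MeasureTheory.tendsto_integral_filter_of_dominated_convergence
    (μ := volume.restrict Ω) (F := F) (f := flim) bound
    (Eventually.of_forall hFmeas) hbound' hboundint hlim
  rw [hFeq]
  have hfinal : ∫ x in Ω, flim x = (q - 1) * ∫ x in Ω, |u x| ^ (q - 2) * v x * w x := by
    have heq : flim = fun x => (q-1) * (|u x| ^ (q-2) * v x * w x) := by
      funext x; rw [hflim]; ring
    rw [heq, integral_const_mul]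
  rw [← hfinal]
  exact hDCT
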